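/- Define Δ : Z[x]/(x^2) → Z[x]/(x^2) ⊗ Z[x]/(x^2) by Δ(1) = 1⊗x + x⊗1 and Δ(x) = x⊗x, extended Z-linearly, and extend to (Z[x]/(x^2))^{⊗2} factor-wise with Koszul-free signs. Then for the submodule N of (Z[x]/(x^2))^{⊗2} ⊕ (Z[x]/(x^2))^{⊗2} (indexed by the unnested and nested configurations) generated by the Type I element (x⊗1 + 1⊗x, -(x⊗1 + 1⊗x)) and the Type II element (x⊗x, -(x⊗x)), the map Δ⊕Δ sends N into N ⊗ (whole module) + (whole module) ⊗ N; hence Δ descends to a well-defined comultiplication on the quotient. -/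

import Mathlib

open TensorProduct

/-- `A^{⊗2}` for `A = ℤ[x]/(x²)`: the free `ℤ`-module on `Bool × Bool`, where
`true` in a coordinate means that factor is `x` (a dot) and `false` means `1`. -/
abbrev V : Type := (Bool × Bool) →₀ ℤ

/-- basis vector -/
noncomputable def e (p : Bool × Bool) : V := Finsupp.single p 1

/-- The value of the factor-wise diagonal `Δ⊗Δ` (with `Δ(1) = 1⊗x + x⊗1`,
`Δ(x) = x⊗x`) on a pure tensor, written in the basis `e`. -/
noncomputable def expand : Bool × Bool → V ⊗[ℤ] V
  | (true, true) => e (true, true) ⊗ₜ e (true, true)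
  | (true, false) => e (true, false) ⊗ₜ e (true, true) + e (true, true) ⊗ₜ e (true, false)
  | (false, true) => e (false, true) ⊗ₜ e (true, true) + e (true, true) ⊗ₜ e (false, true)
  | (false, false) =>
      e (false, false) ⊗ₜ e (true, true) + e (true, true) ⊗ₜ e (false, false) +
      e (true, false) ⊗ₜ e (false, true) + e (false, true) ⊗ₜ e (true, false)

/-- The comultiplication `Δ : V → V ⊗ V`, extended `ℤ`-linearly. -/
noncomputable def Delta : V →ₗ[ℤ] V ⊗[ℤ] V :=
  (Finsupp.lift (V ⊗[ℤ] V) ℤ (Bool × Bool)) expand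

/-- The module of marked incompressible surfaces for `n = 2`: one copy of `V` for
the unnested configuration and one for the nested configuration. -/
abbrev M2 : Type := V × V

/-- `Δ ⊕ Δ` followed by the inclusions `V ⊗ V → M2 ⊗ M2` of each summand. -/
noncomputable def DeltaM : M2 →ₗ[ℤ] M2 ⊗[ℤ] M2 :=
  LinearMap.coprod
    ((TensorProduct.map (LinearMap.inl ℤ V V) (LinearMap.inl ℤ V V)) ∘ₗ Delta)
    ((TensorProduct.map (LinearMap.inr ℤ V V) (LinearMap.inr ℤ V V)) ∘ₗ Delta)

/-- The submodule `N` generated by the Type I element (one dot, unnested minus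
nested) and the Type II element (two dots, unnested minus nested). -/
noncomputable def NSub : Submodule ℤ M2 :=
  Submodule.span ℤ
    {((e (true, false) + e (false, true), -(e (true, false) + e (false, true))) : M2),
     ((e (true, true), -(e (true, true))) : M2)}

/-- `N ⊗ M2 + M2 ⊗ N` inside `M2 ⊗ M2`. -/
noncomputable def NMix : Submodule ℤ (M2 ⊗[ℤ] M2) :=
  Submodule.span ℤ {z | ∃ a ∈ NSub, ∃ b : M2, z = a ⊗ₜ b} ⊔
  Submodule.span ℤ {z | ∃ a : M2, ∃ b ∈ NSub, z = a ⊗ₜ b}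

lemma Delta_e (p : Bool × Bool) : Delta (e p) = expand p := by
  simp [Delta, e]

lemma memL {a : M2} (ha : a ∈ NSub) (b : M2) : a ⊗ₜ[ℤ] b ∈ NMix :=
  Submodule.mem_sup_left (Submodule.subset_span ⟨a, ha, b, rfl⟩)

lemma memR (a : M2) {b : M2} (hb : b ∈ NSub) : a ⊗ₜ[ℤ] b ∈ NMix :=
  Submodule.mem_sup_right (Submodule.subset_span ⟨a, b, hb, rfl⟩)

lemma g1_mem : ((e (true, false) + e (false, true),
    -(e (true, false) + e (false, true))) : M2) ∈ NSub :=
  Submodule.subset_span (Or.inl rfl)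

lemma g2_mem : ((e (true, true), -(e (true, true))) : M2) ∈ NSub :=
  Submodule.subset_span (Or.inr rfl)

/-- `Δ ⊕ Δ` maps `N` into `N ⊗ M2 + M2 ⊗ N`; hence the comultiplication descends
to the quotient `M2/N` (the `n = 2` Bar-Natan skein module). -/
theorem stmt16 : ∀ y ∈ NSub, DeltaM y ∈ NMix := by
  intro y hy
  induction hy using Submodule.span_induction with
  | mem z hz =>
    set a : V := e (true, false) + e (false, true) with ha
    set b : V := e (true, true) with hb
    have hDa : Delta a = a ⊗ₜ b + b ⊗ₜ a := by
      rw [ha, map_add, Delta_e, Delta_e]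
      simp only [expand, hb]
      rw [TensorProduct.add_tmul, TensorProduct.tmul_add]
      abel
    have hDb : Delta b = b ⊗ₜ b := by rw [hb, Delta_e]; rfl
    rcases hz with h | h
    · rw [h]
      have : DeltaM (a, -a) =
          ((a, -a) : M2) ⊗ₜ[ℤ] ((b, 0) : M2) + ((0, a) : M2) ⊗ₜ[ℤ] ((b, -b) : M2)
          + ((b, -b) : M2) ⊗ₜ[ℤ] ((a, 0) : M2) + ((0, b) : M2) ⊗ₜ[ℤ] ((a, -a) : M2) := by
        show TensorProduct.map (LinearMap.inl ℤ V V) (LinearMap.inl ℤ V V) (Delta a) +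
          TensorProduct.map (LinearMap.inr ℤ V V) (LinearMap.inr ℤ V V) (Delta (-a)) = _
        simp only [DeltaM, LinearMap.coprod_apply, LinearMap.comp_apply, map_neg, hDa,
          map_add, TensorProduct.map_tmul, LinearMap.inl_apply, LinearMap.inr_apply]
        have h1 : ((a, -a) : M2) = (a, 0) + (0, -a) := by simp
        have h2 : ((b, -b) : M2) = (b, 0) + (0, -b) := by simp
        have n : ∀ v : V, (((0 : V), -v) : M2) = -(((0 : V), v) : M2) := fun v => by simp
        rw [h1, h2, n a, n b]
        simp only [TensorProduct.add_tmul, TensorProduct.tmul_add, TensorProduct.neg_tmul,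
          TensorProduct.tmul_neg]
        abel
      rw [this]
      exact add_mem (add_mem (add_mem (memL g1_mem _) (memR _ g2_mem)) (memL g2_mem _))
        (memR _ g1_mem)
    · rw [h]
      have : DeltaM (b, -b) =
          ((b, -b) : M2) ⊗ₜ[ℤ] ((b, 0) : M2) + ((0, b) : M2) ⊗ₜ[ℤ] ((b, -b) : M2) := by
        show TensorProduct.map (LinearMap.inl ℤ V V) (LinearMap.inl ℤ V V) (Delta b) +
          TensorProduct.map (LinearMap.inr ℤ V V) (LinearMap.inr ℤ V V) (Delta (-b)) = _
        simp only [DeltaM, LinearMap.coprod_apply, LinearMap.comp_apply, map_neg, hDb,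
          TensorProduct.map_tmul, LinearMap.inl_apply, LinearMap.inr_apply]
        have h2 : ((b, -b) : M2) = (b, 0) + (0, -b) := by simp
        have n : ∀ v : V, (((0 : V), -v) : M2) = -(((0 : V), v) : M2) := fun v => by simp
        rw [h2, n b]
        simp only [TensorProduct.add_tmul, TensorProduct.tmul_add, TensorProduct.neg_tmul,
          TensorProduct.tmul_neg]
        abel
      rw [this]
      exact add_mem (memL g2_mem _) (memR _ g2_mem)
  | zero => simp
  | add x y _ _ hx hy => rw [map_add]; exact add_mem hx hy
  | smul c x _ hx => rw [map_smul]; exact Submodule.smul_mem _ _ hx
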